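/- For all p ≥ 2 and q ≥ 1, there exists a p×p real positive definite matrix C such that the set of pairs (τ, β), with τ ∈ ℝᵖ having positive entries and β a q×p real matrix, satisfying diag(τ₁²,…,τ_p²) + βᵀβ = C, is infinite. -/

import Mathlib

open Matrix

/-- For all `p ≥ 2` and `q ≥ 1`, there exists a `p × p` positive definite matrix `C`
such that the set of pairs `(τ, β)` with `τ ∈ ℝᵖ` having positive entries and `β`
a `q × p` matrix, satisfying `diag(τ₁²,…,τ_p²) + βᵀβ = C`, is infinite. -/
theorem exists_posdef_infinite_solutions (p q : ℕ) (hp : 2 ≤ p) (hq : 1 ≤ q) :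
    ∃ C : Matrix (Fin p) (Fin p) ℝ, C.PosDef ∧
      {x : (Fin p → ℝ) × Matrix (Fin q) (Fin p) ℝ |
        (∀ k, 0 < x.1 k) ∧
        Matrix.diagonal (fun k => x.1 k ^ 2) + x.2ᵀ * x.2 = C}.Infinite := by
  have hp0 : 0 < p := by omega
  have hq0 : 0 < q := by omega
  set i0 : Fin q := ⟨0, hq0⟩
  set j0 : Fin p := ⟨0, hp0⟩
  set t : ℕ → ℝ := fun n => ((n : ℝ) + 2)⁻¹ with ht
  have htpos : ∀ n, 0 < t n := fun n => by positivity
  have htlt : ∀ n, t n ^ 2 < 2 := by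
    intro n
    have h1 : t n ≤ 1 := by
      rw [ht]
      rw [inv_le_one_iff₀]
      right; linarith [Nat.cast_nonneg (α := ℝ) n]
    nlinarith [htpos n]
  refine ⟨Matrix.diagonal (fun _ => 2), Matrix.posDef_diagonal_iff.2 (fun _ => by norm_num), ?_⟩
  apply Set.infinite_of_injective_forall_mem
    (f := fun n : ℕ =>
      ((fun k => if k = j0 then Real.sqrt (2 - t n ^ 2) else Real.sqrt 2),
       (fun i j => if i = i0 ∧ j = j0 then t n else 0)))
  · intro m n hmn
    have h2 := congrArg (fun x => x.2 i0 j0) hmn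
    simp only [if_pos (⟨rfl, rfl⟩ : i0 = i0 ∧ j0 = j0), ht] at h2
    have h3 : (m : ℝ) + 2 = (n : ℝ) + 2 := inv_injective h2
    have h4 : (m : ℝ) = n := by linarith
    exact_mod_cast h4
  · intro n
    constructor
    · intro k
      by_cases hk : k = j0
      · simp only [hk, if_pos rfl]
        exact Real.sqrt_pos.2 (by linarith [htlt n])
      · simp only [if_neg hk]
        exact Real.sqrt_pos.2 (by norm_num)
    · ext i j
      simp only [Matrix.add_apply, Matrix.mul_apply, Matrix.transpose_apply,
        Matrix.diagonal_apply]
      have hsum : ∑ k : Fin q, (if k = i0 ∧ i = j0 then t n else 0) *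
          (if k = i0 ∧ j = j0 then t n else 0)
          = if i = j0 ∧ j = j0 then t n ^ 2 else 0 := by
        rw [Finset.sum_eq_single i0]
        · by_cases hi : i = j0 <;> by_cases hj : j = j0 <;> simp [hi, hj, sq]
        · intro k _ hk
          simp [hk]
        · simp
      change _ + ∑ k : Fin q, (if k = i0 ∧ i = j0 then t n else 0) *
          (if k = i0 ∧ j = j0 then t n else 0) = _
      rw [hsum]
      by_cases hij : i = j
      · subst hij
        by_cases hi : i = j0
        · subst hi
          rw [if_pos rfl, if_pos rfl, if_pos (⟨rfl, rfl⟩ : j0 = j0 ∧ j0 = j0),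
            if_pos rfl, Real.sq_sqrt (by linarith [htlt n] : (0:ℝ) ≤ 2 - t n ^ 2)]
          ring
        · have h1 : ¬(i = j0 ∧ i = j0) := fun h => hi h.1
          simp only [if_pos rfl, if_neg hi, if_neg h1, add_zero]
          rw [Real.sq_sqrt (by norm_num : (0:ℝ) ≤ 2)]
      · have h1 : ¬(i = j0 ∧ j = j0) := by rintro ⟨h, h'⟩; exact hij (h.trans h'.symm)
        simp [hij, h1]
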